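/- Let a > 0 and σ > 0, let Φ be the standard normal cumulative distribution function, set Z = Φ(a/σ) − Φ(−a/σ), and let f(x) = (1/(σ·Z·√(2π)))·exp(−x²/(2σ²)) for x ∈ [−a, a] (and 0 otherwise) be the density of the normal distribution N(0, σ²) truncated to [−a, a]. Let u(x) = 1/(2a) on [−a, a] be the density of Uniform[−a, a]. Then KL(f ‖ u) = ∫_{−a}^{a} f(x)·log(f(x)/u(x)) dx = −(1/2)·log(2πe) − log σ − log Z + (a/(√(2π)·σ·Z))·exp(−a²/(2σ²)) + log(2a). -/

import Mathlib

set_option maxHeartbeats 1000000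

open MeasureTheory

/-- The standard normal cumulative distribution function. -/
noncomputable def stdNormalCDF (x : ℝ) : ℝ :=
  (∫ t in Set.Iic x, Real.exp (-t ^ 2 / 2)) / Real.sqrt (2 * Real.pi)

/-- Closed form of `KL(N(0, σ², −a, a) ‖ Uniform[−a,a])`, the KL divergence from the
normal density `N(0,σ²)` truncated to `[−a,a]` to the uniform density on `[−a,a]`:
it equals `−(1/2)·log(2πe) − log σ − log Z + (a/(√(2π)·σ·Z))·exp(−a²/(2σ²)) + log(2a)`,
where `Z = Φ(a/σ) − Φ(−a/σ)`. -/
theorem kl_truncated_normal_uniform (a σ : ℝ) (ha : 0 < a) (hσ : 0 < σ)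
    (Z : ℝ) (hZ : Z = stdNormalCDF (a / σ) - stdNormalCDF (-(a / σ)))
    (f : ℝ → ℝ)
    (hf : f = Set.indicator (Set.Icc (-a) a)
      (fun x => 1 / (σ * Z * Real.sqrt (2 * Real.pi)) * Real.exp (-x ^ 2 / (2 * σ ^ 2))))
    (u : ℝ → ℝ)
    (hu : u = Set.indicator (Set.Icc (-a) a) (fun _ => 1 / (2 * a))) :
    ∫ x in Set.Icc (-a) a, f x * Real.log (f x / u x) =
      -(1 / 2) * Real.log (2 * Real.pi * Real.exp 1) - Real.log σ - Real.log Z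
        + a / (Real.sqrt (2 * Real.pi) * σ * Z) * Real.exp (-a ^ 2 / (2 * σ ^ 2))
        + Real.log (2 * a) := by
  have hπ : (0:ℝ) < 2 * Real.pi := by positivity
  set S : ℝ := Real.sqrt (2 * Real.pi) with hS
  have hSpos : 0 < S := Real.sqrt_pos.mpr hπ
  have hσ2 : σ ^ 2 ≠ 0 := by positivity
  set g : ℝ → ℝ := fun x => Real.exp (-x ^ 2 / (2 * σ ^ 2)) with hg
  have hgc : Continuous g := by
    apply Real.continuous_exp.comp
    continuity
  -- integrability of the standard gaussian
  have hint : Integrable (fun t : ℝ => Real.exp (-t ^ 2 / 2)) := by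
    have h := integrable_exp_neg_mul_sq (by norm_num : (0:ℝ) < 1/2)
    convert h using 2 with t
    ring_nf
  -- Z * S as an interval integral
  have hZS : Z * S = ∫ t in (-(a/σ))..(a/σ), Real.exp (-t ^ 2 / 2) := by
    rw [hZ, stdNormalCDF, stdNormalCDF, ← hS, div_sub_div_same,
      div_mul_cancel₀ _ (ne_of_gt hSpos)]
    exact intervalIntegral.integral_Iic_sub_Iic hint.integrableOn hint.integrableOn
  have hZpos : 0 < Z := by
    have hpos : 0 < ∫ t in (-(a/σ))..(a/σ), Real.exp (-t ^ 2 / 2) := by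
      apply intervalIntegral.intervalIntegral_pos_of_pos
      · exact hint.intervalIntegrable
      · intro x; positivity
      · have : 0 < a / σ := div_pos ha hσ
        linarith
    rw [← hZS] at hpos
    nlinarith [hSpos]
  set C : ℝ := 1 / (σ * Z * S) with hC
  have hCpos : 0 < C := by positivity
  set E : ℝ := Real.exp (-a ^ 2 / (2 * σ ^ 2)) with hE
  -- first moment integral I₁
  have hI1 : ∫ x in (-a)..a, g x = σ * (Z * S) := by
    have hcomp : ∀ x : ℝ, g x = Real.exp (-(x/σ) ^ 2 / 2) := by
      intro x
      simp only [hg]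
      rw [Real.exp_eq_exp, div_pow]
      rw [neg_div, neg_div, div_div]
      ring_nf
    simp_rw [hcomp]
    rw [intervalIntegral.integral_comp_div (fun t => Real.exp (-t ^ 2 / 2)) (ne_of_gt hσ)]
    rw [hZS, smul_eq_mul, neg_div]
  -- second integral via FTC
  have hderiv : ∀ x : ℝ, HasDerivAt (fun x => -σ ^ 2 * x * g x)
      (x ^ 2 * g x - σ ^ 2 * g x) x := by
    intro x
    have h1 : HasDerivAt (fun x : ℝ => -x ^ 2 / (2 * σ ^ 2)) (-x / σ ^ 2) x := by
      have := ((hasDerivAt_pow 2 x).neg).div_const (2 * σ ^ 2)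
      refine this.congr_deriv ?_
      field_simp
      ring
    have h2 : HasDerivAt g (g x * (-x / σ ^ 2)) x := h1.exp
    have h3 : HasDerivAt (fun x : ℝ => -σ ^ 2 * x) (-σ ^ 2) x := by
      simpa using (hasDerivAt_id x).const_mul (-σ ^ 2)
    have := h3.mul h2
    refine this.congr_deriv ?_
    have hgn : g x ≠ 0 := by positivity
    field_simp
    ring
  have hI2 : ∫ x in (-a)..a, (x ^ 2 * g x - σ ^ 2 * g x) =
      -σ ^ 2 * a * E - -σ ^ 2 * (-a) * E := by
    have := intervalIntegral.integral_eq_sub_of_hasDerivAt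
      (f := fun x => -σ ^ 2 * x * g x) (a := -a) (b := a)
      (fun x _ => hderiv x)
      (by
        apply Continuous.intervalIntegrable
        continuity)
    rw [this]
    show -σ ^ 2 * a * g a - -σ ^ 2 * (-a) * g (-a) = _
    have h1 : g a = E := by simp only [hg, hE]
    have h2 : g (-a) = E := by simp only [hg, hE]; rw [neg_pow]; norm_num
    rw [h1, h2]
  have hI2' : ∫ x in (-a)..a, x ^ 2 * g x = σ ^ 2 * (σ * (Z * S)) - 2 * σ ^ 2 * a * E := by
    have hsub : ∫ x in (-a)..a, (x ^ 2 * g x - σ ^ 2 * g x) =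
        (∫ x in (-a)..a, x ^ 2 * g x) - σ ^ 2 * ∫ x in (-a)..a, g x := by
      rw [intervalIntegral.integral_sub, intervalIntegral.integral_const_mul]
      · apply Continuous.intervalIntegrable; continuity
      · apply Continuous.intervalIntegrable; continuity
    rw [hsub, hI1] at hI2
    linarith
  -- rewrite the LHS
  have hle : -a ≤ a := by linarith
  have key : ∫ x in Set.Icc (-a) a, f x * Real.log (f x / u x) =
      ∫ x in (-a)..a, (Real.log (C * (2 * a)) * C * g x + (-(C / (2 * σ ^ 2))) * (x ^ 2 * g x)) := by
    rw [integral_Icc_eq_integral_Ioc, ← intervalIntegral.integral_of_le hle]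
    apply intervalIntegral.integral_congr
    intro x hx
    rw [Set.uIcc_of_le hle] at hx
    show f x * Real.log (f x / u x) = _
    have hfx : f x = C * g x := by rw [hf, Set.indicator_of_mem hx]
    have hux : u x = 1 / (2 * a) := by rw [hu, Set.indicator_of_mem hx]
    have hgx : 0 < g x := Real.exp_pos _
    rw [hfx, hux]
    have : C * g x / (1 / (2 * a)) = C * (2 * a) * g x := by
      field_simp
    rw [this, Real.log_mul (by positivity) (by positivity),
      Real.log_mul (ne_of_gt hCpos) (by positivity)]
    rw [hg]
    simp only [Real.log_exp]
    field_simp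
  rw [key, intervalIntegral.integral_add, intervalIntegral.integral_const_mul,
    intervalIntegral.integral_const_mul, hI1, hI2']
  · have hCZS : C * (σ * (Z * S)) = 1 := by
      rw [hC]; field_simp
    have hlogC : Real.log C = -(Real.log σ + Real.log Z + Real.log (2 * Real.pi) / 2) := by
      rw [hC, one_div, Real.log_inv, Real.log_mul (by positivity) (ne_of_gt hSpos),
        Real.log_mul (ne_of_gt hσ) (ne_of_gt hZpos), hS, Real.log_sqrt (le_of_lt hπ)]
    have hlog2πe : Real.log (2 * Real.pi * Real.exp 1) = Real.log (2 * Real.pi) + 1 := by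
      rw [Real.log_mul (ne_of_gt hπ) (ne_of_gt (Real.exp_pos 1)), Real.log_exp]
    have hlogCa : Real.log (C * (2 * a)) = Real.log C + Real.log (2 * a) :=
      Real.log_mul (ne_of_gt hCpos) (by positivity)
    rw [hlogCa, hlogC, hlog2πe]
    have hexp : a / (S * σ * Z) * E = C * a * E := by
      rw [hC]; field_simp
    rw [hexp]
    have hrw : (-(Real.log σ + Real.log Z + Real.log (2 * Real.pi) / 2) + Real.log (2 * a)) * C *
          (σ * (Z * S)) + -(C / (2 * σ ^ 2)) * (σ ^ 2 * (σ * (Z * S)) - 2 * σ ^ 2 * a * E) =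
        (-(Real.log σ + Real.log Z + Real.log (2 * Real.pi) / 2) + Real.log (2 * a)) *
          (C * (σ * (Z * S))) - (1/2) * (C * (σ * (Z * S))) + C * a * E := by
      field_simp
      ring
    rw [hrw, hCZS]
    ring
  · apply Continuous.intervalIntegrable; continuity
  · apply Continuous.intervalIntegrable; continuity
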